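/- Let m ≥ 1, α, x, y ∈ ℝ^m with strictly positive entries, and d(a,b) := (a−b)²/(ab). Then |∑_i α_i x_i − ∑_j α_j y_j|² ≤ (max_{k∈[m]} d(x_k, y_k)) · (∑_i α_i x_i) · (∑_j α_j y_j). -/
import Mathlib


theorem leave_one_out_sum_sq_bound (m : ℕ) (hm : 0 < m) (α x y : Fin m → ℝ)
    (hα : ∀ k, 0 < α k) (hx : ∀ k, 0 < x k) (hy : ∀ k, 0 < y k) :
    |(∑ i, α i * x i) - (∑ j, α j * y j)| ^ 2 ≤
      (Finset.univ.sup' (Finset.univ_nonempty_iff.mpr ⟨⟨0, hm⟩⟩)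
          (fun k => (x k - y k) ^ 2 / (x k * y k))) *
        (∑ i, α i * x i) * (∑ j, α j * y j) := by
  set D := Finset.univ.sup' (Finset.univ_nonempty_iff.mpr ⟨⟨0, hm⟩⟩)
      (fun k => (x k - y k) ^ 2 / (x k * y k)) with hDdef
  have hle : ∀ i : Fin m, (x i - y i) ^ 2 / (x i * y i) ≤ D := by
    intro i; rw [hDdef]; exact Finset.le_sup' (fun k => (x k - y k) ^ 2 / (x k * y k)) (Finset.mem_univ i)
  have hD0 : 0 ≤ D := le_trans (div_nonneg (sq_nonneg _) (mul_pos (hx _) (hy _)).le) (hle ⟨0, hm⟩)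
  have key : ∀ i, α i * |x i - y i| ≤
      Real.sqrt D * (Real.sqrt (α i * x i) * Real.sqrt (α i * y i)) := by
    intro i
    have hxy : 0 < x i * y i := mul_pos (hx i) (hy i)
    have h1 : (x i - y i) ^ 2 ≤ D * (x i * y i) := by
      have := hle i
      rw [div_le_iff₀ hxy] at this
      linarith
    have h2 : (α i * |x i - y i|) ^ 2 ≤
        (Real.sqrt D * (Real.sqrt (α i * x i) * Real.sqrt (α i * y i))) ^ 2 := by
      have : (Real.sqrt D * (Real.sqrt (α i * x i) * Real.sqrt (α i * y i))) ^ 2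
          = D * ((α i * x i) * (α i * y i)) := by
        rw [mul_pow, mul_pow, Real.sq_sqrt hD0, Real.sq_sqrt (mul_pos (hα i) (hx i)).le,
          Real.sq_sqrt (mul_pos (hα i) (hy i)).le]
      rw [this, mul_pow, sq_abs]
      calc α i ^ 2 * (x i - y i) ^ 2 ≤ α i ^ 2 * (D * (x i * y i)) := by
            apply mul_le_mul_of_nonneg_left h1 (sq_nonneg _)
        _ = D * ((α i * x i) * (α i * y i)) := by ring
    have hR : 0 ≤ Real.sqrt D * (Real.sqrt (α i * x i) * Real.sqrt (α i * y i)) :=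
      mul_nonneg (Real.sqrt_nonneg _) (mul_nonneg (Real.sqrt_nonneg _) (Real.sqrt_nonneg _))
    have hL : 0 ≤ α i * |x i - y i| := mul_nonneg (hα i).le (abs_nonneg _)
    calc α i * |x i - y i| = Real.sqrt ((α i * |x i - y i|) ^ 2) := (Real.sqrt_sq hL).symm
      _ ≤ Real.sqrt ((Real.sqrt D * (Real.sqrt (α i * x i) * Real.sqrt (α i * y i))) ^ 2) :=
          Real.sqrt_le_sqrt h2
      _ = _ := Real.sqrt_sq hR
  have sumabs : |(∑ i, α i * x i) - (∑ j, α j * y j)| ≤ ∑ i, α i * |x i - y i| := by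
    rw [← Finset.sum_sub_distrib]
    calc |∑ i, (α i * x i - α i * y i)| ≤ ∑ i, |α i * x i - α i * y i| :=
          Finset.abs_sum_le_sum_abs _ _
      _ = ∑ i, α i * |x i - y i| := by
          refine Finset.sum_congr rfl fun i _ => ?_
          rw [← mul_sub, abs_mul, abs_of_pos (hα i)]
  have step2 : ∑ i, α i * |x i - y i| ≤
      Real.sqrt D * ∑ i, Real.sqrt (α i * x i) * Real.sqrt (α i * y i) := by
    rw [Finset.mul_sum]
    exact Finset.sum_le_sum fun i _ => key i
  have cs : (∑ i, Real.sqrt (α i * x i) * Real.sqrt (α i * y i)) ^ 2 ≤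
      (∑ i, α i * x i) * (∑ j, α j * y j) := by
    calc (∑ i, Real.sqrt (α i * x i) * Real.sqrt (α i * y i)) ^ 2
        ≤ (∑ i, Real.sqrt (α i * x i) ^ 2) * (∑ i, Real.sqrt (α i * y i) ^ 2) :=
          Finset.sum_mul_sq_le_sq_mul_sq _ _ _
      _ = (∑ i, α i * x i) * (∑ j, α j * y j) := by
          congr 1 <;> refine Finset.sum_congr rfl fun i _ => Real.sq_sqrt (mul_nonneg (hα i).le (by first | exact (hx i).le | exact (hy i).le))
  have habs : (0:ℝ) ≤ |(∑ i, α i * x i) - (∑ j, α j * y j)| := abs_nonneg _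
  calc |(∑ i, α i * x i) - (∑ j, α j * y j)| ^ 2
      ≤ (Real.sqrt D * ∑ i, Real.sqrt (α i * x i) * Real.sqrt (α i * y i)) ^ 2 := by
        apply pow_le_pow_left₀ habs (le_trans sumabs step2)
    _ = D * (∑ i, Real.sqrt (α i * x i) * Real.sqrt (α i * y i)) ^ 2 := by
        rw [mul_pow, Real.sq_sqrt hD0]
    _ ≤ D * ((∑ i, α i * x i) * (∑ j, α j * y j)) := by
        exact mul_le_mul_of_nonneg_left cs hD0
    _ = D * (∑ i, α i * x i) * (∑ j, α j * y j) := by ring
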